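/- arXiv:2302.00007 — 7 statements merged into one kernel-verified Lean document; each statement's English description precedes it below -/
import Mathlib

section
/- The presented group ⟨u, s ∣ s⁴ = 1, s² = u³⟩ — the quotient of the free group on two generators u, s by the normal closure of the relators s⁴ and s²·u⁻³ — is isomorphic to SL(2,ℤ) via an isomorphism sending the class of u to U and the class of s to S. -/
/-- The matrix `S = !![0,-1; 1,0]` as an element of `SL(2,ℤ)`. -/
def S : Matrix.SpecialLinearGroup (Fin 2) ℤ :=
  ⟨!![0, -1; 1, 0], by norm_num [Matrix.det_fin_two_of]⟩

/-- The matrix `U = !![0,-1; 1,1]` as an element of `SL(2,ℤ)`. -/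
def U : Matrix.SpecialLinearGroup (Fin 2) ℤ :=
  ⟨!![0, -1; 1, 1], by norm_num [Matrix.det_fin_two_of]⟩

/-- The relators `s⁴` and `s²·u⁻³` in the free group on two generators,
where `false` stands for `u` and `true` stands for `s`. -/
def sl2Rels : Set (FreeGroup Bool) :=
  {(FreeGroup.of true) ^ 4, (FreeGroup.of true) ^ 2 * ((FreeGroup.of false) ^ 3)⁻¹}

namespace SL2Aux

abbrev SL2Z := Matrix.SpecialLinearGroup (Fin 2) ℤ
abbrev G := PresentedGroup sl2Rels

def u : G := PresentedGroup.of false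
def s : G := PresentedGroup.of true
def z : G := s ^ 2

lemma sl2_ext (A B : SL2Z) (h : A.1 = B.1) : A = B := Subtype.ext h

lemma hs4 : s ^ 4 = 1 := by
  have h : ((FreeGroup.of true) ^ 4 : FreeGroup Bool) ∈ Subgroup.normalClosure sl2Rels :=
    Subgroup.subset_normalClosure (Or.inl rfl)
  have : PresentedGroup.mk sl2Rels ((FreeGroup.of true) ^ 4) = 1 :=
    (QuotientGroup.eq_one_iff _).mpr h
  rwa [map_pow] at this

lemma hsu : s ^ 2 = u ^ 3 := by
  have h : ((FreeGroup.of true) ^ 2 * ((FreeGroup.of false) ^ 3)⁻¹ : FreeGroup Bool) ∈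
      Subgroup.normalClosure sl2Rels :=
    Subgroup.subset_normalClosure (Or.inr rfl)
  have : PresentedGroup.mk sl2Rels ((FreeGroup.of true) ^ 2 * ((FreeGroup.of false) ^ 3)⁻¹) = 1 :=
    (QuotientGroup.eq_one_iff _).mpr h
  rw [map_mul, map_inv, map_pow, map_pow] at this
  have := mul_inv_eq_one.mp this
  exact this

lemma hz2 : z * z = 1 := by
  have : z * z = s ^ 4 := by rw [z]; group
  rw [this, hs4]

lemma hu3 : u ^ 3 = z := hsu.symm

lemma z_comm (g : G) : z * g = g * z := by
  have : g ∈ Subgroup.centralizer {z} := by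
    apply PresentedGroup.generated_by
    intro j
    rw [Subgroup.mem_centralizer_iff]
    rintro h (rfl : h = z)
    cases j
    · show z * u = u * z
      rw [← hu3]; group
    · show z * s = s * z
      rw [z]; group
  exact Subgroup.mem_centralizer_iff.mp this z rfl

lemma s_inv : s⁻¹ = z * s := by
  have h : s * (z * s) = 1 := by
    rw [z_comm, ← mul_assoc]
    calc s * s * z = s ^ 4 := by rw [z]; group
    _ = 1 := hs4
  exact inv_eq_of_mul_eq_one_right h

lemma u_inv : u⁻¹ = z * u ^ 2 := by
  have h : u * (z * u ^ 2) = 1 := by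
    have h1 : u * (z * u ^ 2) = z * (u * u ^ 2) := by
      rw [← mul_assoc, ← z_comm, mul_assoc]
    rw [h1, ← pow_succ', hu3, hz2]
  exact inv_eq_of_mul_eq_one_right h

def f : Bool → SL2Z := fun b => bif b then S else U

lemma rels_hold : ∀ r ∈ sl2Rels, FreeGroup.lift f r = 1 := by
  rintro r (rfl | rfl)
  · rw [map_pow, FreeGroup.lift_apply_of]
    show S ^ 4 = 1
    ext i j
    rw [Matrix.SpecialLinearGroup.coe_pow]
    fin_cases i <;> fin_cases j <;> simp [S, pow_succ, Matrix.mul_fin_two]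
  · rw [map_mul, map_inv, map_pow, map_pow, FreeGroup.lift_apply_of, FreeGroup.lift_apply_of]
    show S ^ 2 * (U ^ 3)⁻¹ = 1
    ext i j
    simp only [Matrix.SpecialLinearGroup.coe_mul, Matrix.SpecialLinearGroup.coe_inv,
      Matrix.SpecialLinearGroup.coe_pow]
    fin_cases i <;> fin_cases j <;> simp [S, U, pow_succ, Matrix.mul_fin_two]

def φ : G →* SL2Z := PresentedGroup.toGroup rels_hold

lemma φ_u : φ u = U := PresentedGroup.toGroup.of rels_hold
lemma φ_s : φ s = S := PresentedGroup.toGroup.of rels_hold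

lemma φ_z : φ z = -1 := by
  rw [z, map_pow, φ_s]
  ext i j
  rw [Matrix.SpecialLinearGroup.coe_pow]
  fin_cases i <;> fin_cases j <;> simp [S, pow_succ, Matrix.mul_fin_two]


def gblock (a : ℤ) : G := s * u ^ a
def mblock (a : ℤ) : SL2Z := S * U ^ a

def Gbody : List ℤ → G
  | [] => 1
  | a :: k => u ^ a * (k.map gblock).prod

def Mbody : List ℤ → SL2Z
  | [] => 1
  | a :: k => U ^ a * (k.map mblock).prod

lemma φ_gblock : φ ∘ gblock = mblock := by
  funext b
  simp [gblock, mblock, Function.comp, map_mul, map_zpow, φ_u, φ_s]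

lemma φ_Gbody (l : List ℤ) : φ (Gbody l) = Mbody l := by
  cases l with
  | nil => simp [Gbody, Mbody]
  | cons a k =>
    simp only [Gbody, Mbody, map_mul, map_zpow, φ_u, map_list_prod, List.map_map, φ_gblock]

def OK (l : List ℤ) : Prop :=
  (∀ a ∈ l, a = 0 ∨ a = 1 ∨ a = 2) ∧ (∀ a ∈ l.tail.dropLast, a ≠ 0)

def NFP (g : G) : Prop := ∃ (e : Bool) (l : List ℤ), OK l ∧ g = (cond e z 1) * Gbody l

lemma cond_comm (e : Bool) (g : G) : g * (cond e z 1) = (cond e z 1) * g := by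
  cases e <;> simp [z_comm]

lemma z_cond (e : Bool) (X : G) : cond e z 1 * (z * X) = cond (!e) z 1 * X := by
  cases e <;> simp [← mul_assoc, hz2]

lemma mem_dropLast_cons {x c : ℤ} {k : List ℤ} (h : x ∈ k.dropLast) :
    x ∈ (c :: k).dropLast := by
  cases k with
  | nil => simp at h
  | cons d k' => rw [List.dropLast_cons₂]; exact List.mem_cons_of_mem _ h

lemma Gbody_zero_cons (a : ℤ) (k : List ℤ) :
    Gbody (0 :: a :: k) = s * Gbody (a :: k) := by
  simp [Gbody, gblock, mul_assoc]

lemma ss_eq_z : s * s = z := by rw [z, pow_two]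

lemma step_z {g : G} (h : NFP g) : NFP (z * g) := by
  obtain ⟨e, l, hOK, rfl⟩ := h
  refine ⟨!e, l, hOK, ?_⟩
  cases e <;> simp [← mul_assoc, hz2]

lemma step_s {g : G} (h : NFP g) : NFP (s * g) := by
  obtain ⟨e, l, ⟨h01, hint⟩, rfl⟩ := h
  have hmove : s * (cond e z 1 * Gbody l) = cond e z 1 * (s * Gbody l) := by
    rw [← mul_assoc, cond_comm, mul_assoc]
  rw [hmove]
  rcases l with _ | ⟨a, k⟩
  · exact ⟨e, [0, 0], ⟨by intro x hx; simp at hx; simp [hx], by simp⟩, by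
      simp [Gbody, gblock]⟩
  by_cases ha : a = 0
  · subst ha
    rcases k with _ | ⟨c, k'⟩
    · exact ⟨e, [0, 0], ⟨by intro x hx; simp at hx; simp [hx], by simp⟩, by
        simp [Gbody, gblock]⟩
    · refine ⟨!e, c :: k', ⟨fun x hx => h01 x (by simp [hx]), ?_⟩, ?_⟩
      · intro x hx
        exact hint x (mem_dropLast_cons hx)
      · have h2 : s * Gbody (0 :: c :: k') = z * Gbody (c :: k') := by
          rw [Gbody_zero_cons, ← mul_assoc, ss_eq_z]
        rw [h2, z_cond]
  · refine ⟨e, 0 :: a :: k, ⟨?_, ?_⟩, by rw [Gbody_zero_cons]⟩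
    · intro x hx
      rcases List.mem_cons.mp hx with rfl | hx
      · left; rfl
      · exact h01 x hx
    · intro x hx
      simp only [List.tail_cons] at hx
      rcases k with _ | ⟨d, k''⟩
      · simp at hx
      · rw [List.dropLast_cons₂] at hx
        rcases List.mem_cons.mp hx with rfl | hx
        · exact ha
        · exact hint x (by simpa using hx)

lemma step_u {g : G} (h : NFP g) : NFP (u * g) := by
  obtain ⟨e, l, ⟨h01, hint⟩, rfl⟩ := h
  have hmove : u * (cond e z 1 * Gbody l) = cond e z 1 * (u * Gbody l) := by
    rw [← mul_assoc, cond_comm, mul_assoc]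
  rw [hmove]
  rcases l with _ | ⟨a, k⟩
  · exact ⟨e, [1], ⟨by intro x hx; simp at hx; simp [hx], by simp⟩, by
      simp [Gbody]⟩
  have hhead : u * Gbody (a :: k) = u ^ (a + 1) * (k.map gblock).prod := by
    rw [Gbody, ← mul_assoc, ← zpow_one_add, add_comm]
  rcases h01 a (by simp) with rfl | rfl | rfl
  · refine ⟨e, 1 :: k, ⟨?_, ?_⟩, ?_⟩
    · rintro x hx
      rcases List.mem_cons.mp hx with rfl | hx
      · right; left; rfl
      · exact h01 x (by simp [hx])
    · simpa using hint
    · rw [hhead]; norm_num [Gbody]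
  · refine ⟨e, 2 :: k, ⟨?_, ?_⟩, ?_⟩
    · rintro x hx
      rcases List.mem_cons.mp hx with rfl | hx
      · right; right; rfl
      · exact h01 x (by simp [hx])
    · simpa using hint
    · rw [hhead]; norm_num [Gbody]
  · refine ⟨!e, 0 :: k, ⟨?_, ?_⟩, ?_⟩
    · rintro x hx
      rcases List.mem_cons.mp hx with rfl | hx
      · left; rfl
      · exact h01 x (by simp [hx])
    · simpa using hint
    · rw [hhead]
      have h3 : (u : G) ^ ((2 : ℤ) + 1) = z := by
        rw [show ((2:ℤ) + 1) = ((3 : ℕ) : ℤ) by norm_num, zpow_natCast, hu3]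
      rw [h3, z_cond]
      simp [Gbody]

lemma step_sinv {g : G} (h : NFP g) : NFP (s⁻¹ * g) := by
  rw [s_inv, mul_assoc]
  exact step_z (step_s h)

lemma step_uinv {g : G} (h : NFP g) : NFP (u⁻¹ * g) := by
  rw [u_inv, mul_assoc]
  have : u ^ 2 * g = u * (u * g) := by rw [pow_two, mul_assoc]
  rw [this]
  exact step_z (step_u (step_u h))

lemma NFP_all (g : G) : NFP g := by
  have h1 : g ∈ Subgroup.closure (Set.range (PresentedGroup.of : Bool → G)) := by
    rw [PresentedGroup.closure_range_of]; trivial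
  rw [← Subgroup.mem_toSubmonoid, Subgroup.closure_toSubmonoid] at h1
  obtain ⟨L, hL, rfl⟩ := Submonoid.exists_list_of_mem_closure h1
  clear h1
  induction L with
  | nil => exact ⟨false, [], ⟨by simp, by simp⟩, by simp [Gbody]⟩
  | cons x L ih =>
    have hx := hL x (by simp)
    have hrest := ih (fun y hy => hL y (by simp [hy]))
    rw [List.prod_cons]
    rcases hx with ⟨b, rfl⟩ | hxi
    · cases b
      · exact step_u hrest
      · exact step_s hrest
    · rw [Set.mem_inv] at hxi
      obtain ⟨b, hb⟩ := hxi
      have hxx : x = (PresentedGroup.of b : G)⁻¹ := by rw [hb]; simp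
      subst hxx
      cases b
      · exact step_uinv hrest
      · exact step_sinv hrest


abbrev Mat := Matrix (Fin 2) (Fin 2) ℤ

def Tm : Mat := !![1,1;0,1]
def Lm : Mat := !![1,0;1,1]
def Um : Mat := !![0,-1;1,1]
def Um2 : Mat := !![-1,-1;1,0]
def Sm : Mat := !![0,-1;1,0]

lemma hU0 : (U ^ (0:ℤ) : SL2Z).1 = 1 := by norm_num
lemma hU1 : (U ^ (1:ℤ) : SL2Z).1 = Um := by norm_num; rfl
lemma hU2 : (U ^ (2:ℤ) : SL2Z).1 = Um2 := by
  rw [zpow_two]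
  show U.1 * U.1 = Um2
  norm_num [U, Um2, Matrix.mul_fin_two]

lemma hmblock0 : (mblock 0).1 = Sm := by
  simp [mblock, hU0]; rfl
lemma hmblock1 : (mblock 1).1 = -Tm := by
  show (S.1 * (U ^ (1:ℤ) : SL2Z).1) = -Tm
  rw [hU1]
  norm_num [S, Um, Tm, Matrix.mul_fin_two]
lemma hmblock2 : (mblock 2).1 = -Lm := by
  show (S.1 * (U ^ (2:ℤ) : SL2Z).1) = -Lm
  rw [hU2]
  norm_num [S, Um2, Lm, Matrix.mul_fin_two]

def PosM (A : Mat) : Prop :=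
  1 ≤ A 0 0 ∧ 0 ≤ A 0 1 ∧ 0 ≤ A 1 0 ∧ 1 ≤ A 1 1 ∧ 1 ≤ A 0 1 + A 1 0

lemma PosM_Tm : PosM Tm := by refine ⟨?_,?_,?_,?_,?_⟩ <;> norm_num [Tm]
lemma PosM_Lm : PosM Lm := by refine ⟨?_,?_,?_,?_,?_⟩ <;> norm_num [Lm]

lemma PosM_Tmul {R : Mat} (h : PosM R) : PosM (Tm * R) := by
  obtain ⟨h1,h2,h3,h4,h5⟩ := h
  refine ⟨?_,?_,?_,?_,?_⟩ <;>
    simp [Tm, Matrix.mul_apply, Fin.sum_univ_succ] <;> linarith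

lemma PosM_Lmul {R : Mat} (h : PosM R) : PosM (Lm * R) := by
  obtain ⟨h1,h2,h3,h4,h5⟩ := h
  refine ⟨?_,?_,?_,?_,?_⟩ <;>
    simp [Lm, Matrix.mul_apply, Fin.sum_univ_succ] <;> linarith

lemma Qpos : ∀ (k : List ℤ), (∀ a ∈ k, a = 1 ∨ a = 2) → k ≠ [] →
    ∃ R : Mat, PosM R ∧
      (((k.map mblock).prod : SL2Z).1 = R ∨ ((k.map mblock).prod : SL2Z).1 = -R)
  | [], _, hne => absurd rfl hne
  | [a], h, _ => by
      rcases h a (by simp) with rfl | rfl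
      · exact ⟨Tm, PosM_Tm, Or.inr (by simp [hmblock1])⟩
      · exact ⟨Lm, PosM_Lm, Or.inr (by simp [hmblock2])⟩
  | a :: b :: k, h, _ => by
      obtain ⟨R, hR, hQ⟩ := Qpos (b :: k) (fun x hx => h x (List.mem_cons_of_mem _ hx)) (by simp)
      have hsplit : ((List.map mblock (a :: b :: k)).prod : SL2Z).1 =
          (mblock a).1 * ((List.map mblock (b :: k)).prod : SL2Z).1 := by
        rw [List.map_cons, List.prod_cons]; rfl
      rcases h a (by simp) with rfl | rfl
      · refine ⟨Tm * R, PosM_Tmul hR, ?_⟩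
        rcases hQ with hq | hq
        · right; rw [hsplit, hmblock1, hq]; simp [neg_mul]
        · left; rw [hsplit, hmblock1, hq]; simp [neg_mul, mul_neg]
      · refine ⟨Lm * R, PosM_Lmul hR, ?_⟩
        rcases hQ with hq | hq
        · right; rw [hsplit, hmblock2, hq]; simp [neg_mul]
        · left; rw [hsplit, hmblock2, hq]; simp [neg_mul, mul_neg]

lemma sign_cases {A Q R B : Mat} (hQ : Q = R ∨ Q = -R)
    (hW : A * Q * B = 1 ∨ A * Q * B = -1) :
    A * R * B = 1 ∨ A * R * B = -1 := by
  rcases hQ with rfl | rfl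
  · exact hW
  · have hh : A * R * B = -(A * (-R) * B) := by simp [mul_neg, neg_mul]
    rcases hW with h | h
    · right; rw [hh, h]
    · left; rw [hh, h, neg_neg]

-- contradiction helpers
lemma no_id {R : Mat} (h : PosM R) (heq : R = 1 ∨ R = -1) : False := by
  obtain ⟨h1,h2,h3,h4,h5⟩ := h
  rcases heq with rfl | rfl
  · norm_num [Matrix.one_apply] at h5
  · norm_num [Matrix.one_apply] at h1
lemma no_Um {R : Mat} (h : PosM R) (heq : Um * R = 1 ∨ Um * R = -1) : False := by
  obtain ⟨h1,h2,h3,h4,h5⟩ := h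
  rcases heq with h' | h' <;> have := congrFun (congrFun h' 0) 1 <;>
    simp [Um, Matrix.mul_apply, Matrix.vecMul, dotProduct, Fin.sum_univ_succ] at this <;> linarith
lemma no_Um2 {R : Mat} (h : PosM R) (heq : Um2 * R = 1 ∨ Um2 * R = -1) : False := by
  obtain ⟨h1,h2,h3,h4,h5⟩ := h
  rcases heq with h' | h' <;> have := congrFun (congrFun h' 0) 1 <;>
    simp [Um2, Matrix.mul_apply, Matrix.vecMul, dotProduct, Fin.sum_univ_succ] at this <;> linarith
lemma no_Sm {R : Mat} (h : PosM R) (heq : R * Sm = 1 ∨ R * Sm = -1) : False := by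
  obtain ⟨h1,h2,h3,h4,h5⟩ := h
  rcases heq with h' | h' <;> have := congrFun (congrFun h' 0) 1 <;>
    simp [Sm, Matrix.mul_apply, Matrix.vecMul, dotProduct, Fin.sum_univ_succ] at this <;> linarith
lemma no_UmSm {R : Mat} (h : PosM R) (heq : Um * R * Sm = 1 ∨ Um * R * Sm = -1) : False := by
  obtain ⟨h1,h2,h3,h4,h5⟩ := h
  rcases heq with h' | h' <;> have := congrFun (congrFun h' 1) 0 <;>
    simp [Um, Sm, Matrix.mul_apply, Matrix.vecMul, dotProduct, Fin.sum_univ_succ] at this <;> linarith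
lemma no_Um2Sm {R : Mat} (h : PosM R) (heq : Um2 * R * Sm = 1 ∨ Um2 * R * Sm = -1) : False := by
  obtain ⟨h1,h2,h3,h4,h5⟩ := h
  rcases heq with h' | h' <;> have := congrFun (congrFun h' 0) 1 <;>
    simp [Um2, Sm, Matrix.mul_apply, Matrix.vecMul, dotProduct, Fin.sum_univ_succ] at this <;> linarith


lemma not_pm1_01 {M : Mat} (hM : M 0 1 ≠ 0) (hW : M = 1 ∨ M = -1) : False := by
  rcases hW with rfl | rfl <;> simp [Matrix.one_apply] at hM
lemma not_pm1_10 {M : Mat} (hM : M 1 0 ≠ 0) (hW : M = 1 ∨ M = -1) : False := by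
  rcases hW with rfl | rfl <;> simp [Matrix.one_apply] at hM

lemma coe_Mbody_cons (a : ℤ) (k : List ℤ) :
    (Mbody (a :: k)).1 = (U ^ a : SL2Z).1 * ((k.map mblock).prod : SL2Z).1 := rfl

lemma Mbody_triv (l : List ℤ) (hOK : OK l)
    (hW : (Mbody l).1 = 1 ∨ (Mbody l).1 = -1) : l = [] ∨ l = [0] := by
  obtain ⟨h01, hint⟩ := hOK
  rcases l with _ | ⟨a, k⟩
  · exact Or.inl rfl
  rw [coe_Mbody_cons] at hW
  by_cases hk : k = []
  · subst hk
    simp only [List.map_nil, List.prod_nil] at hW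
    rcases h01 a (by simp) with rfl | rfl | rfl
    · exact Or.inr rfl
    · rw [hU1] at hW
      simp only [Matrix.SpecialLinearGroup.coe_one, mul_one] at hW
      exact absurd hW (by intro h; exact not_pm1_01 (by norm_num [Um]) h)
    · rw [hU2] at hW
      simp only [Matrix.SpecialLinearGroup.coe_one, mul_one] at hW
      exact absurd hW (by intro h; exact not_pm1_01 (by norm_num [Um2]) h)
  · exfalso
    have hks : k.dropLast ++ [k.getLast hk] = k := List.dropLast_append_getLast hk
    set j := k.dropLast with hjdef
    set t := k.getLast hk with htdef
    have hprod : ((k.map mblock).prod : SL2Z).1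
        = ((j.map mblock).prod : SL2Z).1 * (mblock t).1 := by
      conv_lhs => rw [← hks]
      rw [List.map_append, List.prod_append]
      simp
    have hj12 : ∀ x ∈ j, x = 1 ∨ x = 2 := by
      intro x hx
      have hx0 : x ≠ 0 := hint x (by simpa using hx)
      have hxk : x ∈ k := List.dropLast_subset k hx
      rcases h01 x (List.mem_cons_of_mem _ hxk) with rfl | h | h
      · exact absurd rfl hx0
      · tauto
      · tauto
    have htmem : t ∈ k := List.getLast_mem hk
    rcases h01 t (List.mem_cons_of_mem _ htmem) with ht0 | ht12 | ht12
    · -- trailing zero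
      have hps : ((k.map mblock).prod : SL2Z).1
          = ((j.map mblock).prod : SL2Z).1 * Sm := by
        rw [hprod, ht0, hmblock0]
      by_cases hjnil : j = []
      · -- k = [0]
        rw [hps, hjnil] at hW
        simp only [List.map_nil, List.prod_nil, Matrix.SpecialLinearGroup.coe_one,
          one_mul] at hW
        rcases h01 a (by simp) with rfl | rfl | rfl
        · rw [hU0, one_mul] at hW
          exact not_pm1_01 (by norm_num [Sm]) hW
        · rw [hU1] at hW
          refine not_pm1_10 ?_ hW
          norm_num [Um, Sm, Matrix.mul_apply, Fin.sum_univ_succ]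
        · rw [hU2] at hW
          refine not_pm1_01 ?_ hW
          norm_num [Um2, Sm, Matrix.mul_apply, Fin.sum_univ_succ]
      · obtain ⟨R, hR, hQ⟩ := Qpos j hj12 hjnil
        rw [hps, ← mul_assoc] at hW
        have hW' := sign_cases hQ hW
        rcases h01 a (by simp) with rfl | rfl | rfl
        · rw [hU0, one_mul] at hW'
          exact no_Sm hR hW'
        · rw [hU1] at hW'
          exact no_UmSm hR hW'
        · rw [hU2] at hW'
          exact no_Um2Sm hR hW'
    · -- all of k in {1,2}
      have hk12 : ∀ x ∈ k, x = 1 ∨ x = 2 := by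
        intro x hx
        rw [← hks] at hx
        rcases List.mem_append.mp hx with h | h
        · exact hj12 x h
        · simp at h; subst h; left; exact ht12.symm ▸ rfl
      obtain ⟨R, hR, hQ⟩ := Qpos k hk12 hk
      have hW2 : (U ^ a : SL2Z).1 * ((k.map mblock).prod : SL2Z).1 * (1 : Mat) = 1 ∨
          (U ^ a : SL2Z).1 * ((k.map mblock).prod : SL2Z).1 * (1 : Mat) = -1 := by
        rw [mul_one]; exact hW
      have hW' := sign_cases hQ hW2
      rw [mul_one] at hW'
      rcases h01 a (by simp) with rfl | rfl | rfl
      · rw [hU0, one_mul] at hW'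
        exact no_id hR hW'
      · rw [hU1] at hW'
        exact no_Um hR hW'
      · rw [hU2] at hW'
        exact no_Um2 hR hW'
    · have hk12 : ∀ x ∈ k, x = 1 ∨ x = 2 := by
        intro x hx
        rw [← hks] at hx
        rcases List.mem_append.mp hx with h | h
        · exact hj12 x h
        · simp at h; subst h; right; exact ht12.symm ▸ rfl
      obtain ⟨R, hR, hQ⟩ := Qpos k hk12 hk
      have hW2 : (U ^ a : SL2Z).1 * ((k.map mblock).prod : SL2Z).1 * (1 : Mat) = 1 ∨
          (U ^ a : SL2Z).1 * ((k.map mblock).prod : SL2Z).1 * (1 : Mat) = -1 := by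
        rw [mul_one]; exact hW
      have hW' := sign_cases hQ hW2
      rw [mul_one] at hW'
      rcases h01 a (by simp) with rfl | rfl | rfl
      · rw [hU0, one_mul] at hW'
        exact no_id hR hW'
      · rw [hU1] at hW'
        exact no_Um hR hW'
      · rw [hU2] at hW'
        exact no_Um2 hR hW'

lemma φ_inj : Function.Injective φ := by
  rw [injective_iff_map_eq_one]
  intro g hg
  obtain ⟨e, l, hOK, rfl⟩ := NFP_all g
  cases e
  · simp only [cond_false, one_mul] at hg ⊢
    rw [φ_Gbody] at hg
    have hl := Mbody_triv l hOK (Or.inl (by rw [hg]; rfl))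
    rcases hl with rfl | rfl <;> simp [Gbody]
  · simp only [cond_true] at hg ⊢
    rw [map_mul, φ_Gbody, φ_z] at hg
    have hcoe : (-1 : SL2Z).1 * (Mbody l).1 = 1 := by
      rw [← Matrix.SpecialLinearGroup.coe_mul, hg]; rfl
    have hM : (Mbody l).1 = -1 := by
      have h4 : -(Mbody l).1 = 1 := by
        rw [← hcoe]; simp
      exact neg_eq_iff_eq_neg.mp h4
    have hl := Mbody_triv l hOK (Or.inr hM)
    exfalso
    rcases hl with rfl | rfl <;>
      simp only [Mbody, List.map_nil, List.prod_nil, zpow_zero, one_mul, mul_one] at hg <;>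
      · have h3 := congrArg (fun m : SL2Z => m.1 0 0) hg
        simp at h3


lemma natAbs_emod_lt (a c : ℤ) (hc : c ≠ 0) : (a % c).natAbs < c.natAbs := by
  have h0 : 0 ≤ a % c := Int.emod_nonneg a hc
  have h1 : a % c < |c| := by
    have := Int.emod_lt_of_pos a (abs_pos.mpr hc)
    rwa [Int.emod_abs] at this
  rw [Int.abs_eq_natAbs] at h1
  omega

lemma hST : S * ModularGroup.T = U := by
  ext i j
  rw [Matrix.SpecialLinearGroup.coe_mul]
  fin_cases i <;> fin_cases j <;>
    simp [S, U, ModularGroup.T, Matrix.mul_fin_two]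

def H : Subgroup SL2Z := Subgroup.closure {S, U}

lemma S_mem : S ∈ H := Subgroup.subset_closure (Or.inl rfl)
lemma U_mem : U ∈ H := Subgroup.subset_closure (Or.inr rfl)
lemma T_mem : ModularGroup.T ∈ H := by
  have h : ModularGroup.T = S⁻¹ * U := by rw [← hST]; group
  rw [h]; exact mul_mem (inv_mem S_mem) U_mem

lemma key_entry (A : SL2Z) (n : ℤ) :
    (S * (ModularGroup.T ^ n * A)).1 1 0 = A.1 0 0 + n * A.1 1 0 := by
  simp only [Matrix.SpecialLinearGroup.coe_mul]
  simp [ModularGroup.coe_T_zpow, S, Matrix.mul_apply, Matrix.vecMul, dotProduct,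
    Fin.sum_univ_succ]

lemma mem_closure_SU (A : SL2Z) : A ∈ H := by
  generalize hn : (A.1 1 0).natAbs = n
  induction n using Nat.strong_induction_on generalizing A with
  | _ n ih =>
    by_cases hc : A.1 1 0 = 0
    · have hdet : A.1 0 0 * A.1 1 1 = 1 := by
        have h := A.2
        rw [Matrix.det_fin_two, hc, mul_zero, sub_zero] at h
        exact h
      rcases Int.mul_eq_one_iff_eq_one_or_neg_one.mp hdet with ⟨h1, h2⟩ | ⟨h1, h2⟩
      · have hA : A = ModularGroup.T ^ (A.1 0 1) := by
          apply Subtype.ext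
          rw [ModularGroup.coe_T_zpow]
          conv_lhs => rw [Matrix.eta_fin_two A.1]
          rw [h1, h2, hc]
        rw [hA]; exact zpow_mem T_mem _
      · have hS2 : (S ^ 2 : SL2Z) = -1 := by
          ext i j; rw [Matrix.SpecialLinearGroup.coe_pow]; fin_cases i <;> fin_cases j <;> simp [S, pow_succ, Matrix.mul_fin_two]
        have hA : A = S ^ 2 * ModularGroup.T ^ (-(A.1 0 1)) := by
          apply Subtype.ext
          rw [Matrix.SpecialLinearGroup.coe_mul, hS2, ModularGroup.coe_T_zpow]
          conv_lhs => rw [Matrix.eta_fin_two A.1]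
          rw [h1, h2, hc]
          ext i j
          fin_cases i <;> fin_cases j <;> simp
        rw [hA]; exact mul_mem (pow_mem S_mem 2) (zpow_mem T_mem _)
    · set q : ℤ := A.1 0 0 / A.1 1 0 with hq
      set B := S * (ModularGroup.T ^ (-q) * A) with hB
      have hB10 : B.1 1 0 = A.1 0 0 % A.1 1 0 := by
        rw [hB, key_entry, Int.emod_def]; ring
      have hlt : (B.1 1 0).natAbs < n := by
        rw [hB10, ← hn]; exact natAbs_emod_lt _ _ hc
      have hBmem := ih _ hlt B rfl
      have hA : A = ModularGroup.T ^ q * (S⁻¹ * B) := by rw [hB]; group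
      rw [hA]
      exact mul_mem (zpow_mem T_mem _) (mul_mem (inv_mem S_mem) hBmem)

lemma φ_surj : Function.Surjective φ := by
  intro A
  have hle : H ≤ φ.range := by
    rw [H, Subgroup.closure_le]
    rintro x (rfl | rfl)
    · exact ⟨s, φ_s⟩
    · exact ⟨u, φ_u⟩
  exact hle (mem_closure_SU A)

end SL2Aux





/-- The presented group `⟨u, s ∣ s⁴ = 1, s² = u³⟩` is isomorphic to `SL(2,ℤ)`
via an isomorphism sending (the class of) `u` to `U` and `s` to `S`. -/
theorem sl2z_presentation :
    ∃ Ψ : PresentedGroup sl2Rels ≃* Matrix.SpecialLinearGroup (Fin 2) ℤ,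
      Ψ (PresentedGroup.of false) = U ∧ Ψ (PresentedGroup.of true) = S := by
  refine ⟨MulEquiv.ofBijective SL2Aux.φ ⟨SL2Aux.φ_inj, SL2Aux.φ_surj⟩, ?_, ?_⟩
  · exact SL2Aux.φ_u
  · exact SL2Aux.φ_s
end

section
/- Let φ₁ : ℤ/4ℤ → ℤ/12ℤ be the injective homomorphism sending the generator to 3, and φ₂ : ℤ/4ℤ → ℤ/8ℤ the injective homomorphism sending the generator to 2. Then there is a group isomorphism Ψ from the amalgamated free product (ℤ/12ℤ) *_{ℤ/4ℤ} (ℤ/8ℤ) (the pushout of φ₁ and φ₂) onto the metaplectic group Mp(2,ℤ) such that Ψ(ι₁(1)) = û and Ψ(ι₂(1)) = ŝ, where 1 denotes the distinguished generator of each cyclic factor. -/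
/-- The relators `ŝ⁸` and `ŝ²·û⁻³` in the free group on two generators,
where `false` stands for `û` and `true` stands for `ŝ`. -/
def mpRels : Set (FreeGroup Bool) :=
  {(FreeGroup.of true) ^ 8, (FreeGroup.of true) ^ 2 * ((FreeGroup.of false) ^ 3)⁻¹}

/-- The metaplectic group `Mp(2,ℤ) = ⟨û, ŝ ∣ ŝ⁸ = 1, ŝ² = û³⟩`. -/
abbrev Mp : Type := PresentedGroup mpRels

/-- The generator `û` of `Mp(2,ℤ)`. -/
def uhat : Mp := PresentedGroup.of false

/-- The generator `ŝ` of `Mp(2,ℤ)`. -/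
def shat : Mp := PresentedGroup.of true

/-- The two factors `ℤ/12ℤ` (at `false`) and `ℤ/8ℤ` (at `true`) of the amalgamated
free product, written multiplicatively. -/
def Fac : Bool → Type
  | false => Multiplicative (ZMod 12)
  | true => Multiplicative (ZMod 8)

instance instFacGroup : ∀ b, Group (Fac b)
  | false => inferInstanceAs (Group (Multiplicative (ZMod 12)))
  | true => inferInstanceAs (Group (Multiplicative (ZMod 8)))

/-- The family of amalgamating maps `ℤ/4ℤ → ℤ/12ℤ` and `ℤ/4ℤ → ℤ/8ℤ`. -/
def fam (φ₁ : Multiplicative (ZMod 4) →* Multiplicative (ZMod 12))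
    (φ₂ : Multiplicative (ZMod 4) →* Multiplicative (ZMod 8)) :
    ∀ b, Multiplicative (ZMod 4) →* Fac b
  | false => φ₁
  | true => φ₂

def zmodAux {G : Type*} [Group G] (n : ℕ) (g : G) (h : g ^ n = 1) :
    { f : ℤ →+ Additive G // f n = 0 } :=
  ⟨(zmultiplesHom (Additive G)) (Additive.ofMul g), by
    show ((n : ℤ) • Additive.ofMul g) = 0
    rw [← ofMul_zpow]
    simp [h]⟩

def zmodMulHom {G : Type*} [Group G] (n : ℕ) (g : G) (h : g ^ n = 1) :
    Multiplicative (ZMod n) →* G :=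
  AddMonoidHom.toMultiplicativeLeft (ZMod.lift n (zmodAux n g h))

theorem zmodMulHom_natCast {G : Type*} [Group G] (n : ℕ) (g : G) (h : g ^ n = 1) (m : ℕ) :
    zmodMulHom n g h (Multiplicative.ofAdd ((m : ℤ) : ZMod n)) = g ^ m := by
  show Additive.toMul ((ZMod.lift n (zmodAux n g h)) (((m : ℤ) : ZMod n))) = g ^ m
  rw [ZMod.lift_coe]
  show Additive.toMul ((m : ℤ) • Additive.ofMul g) = g ^ m
  rw [← ofMul_zpow]
  simp

theorem zmodMulHom_one {G : Type*} [Group G] (n : ℕ) (g : G) (h : g ^ n = 1) :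
    zmodMulHom n g h (Multiplicative.ofAdd (1 : ZMod n)) = g := by
  have := zmodMulHom_natCast n g h 1
  simpa using this

theorem zmodMulHom_ext {G : Type*} [Group G] {n : ℕ} [NeZero n]
    {f g : Multiplicative (ZMod n) →* G}
    (h : f (Multiplicative.ofAdd (1 : ZMod n)) = g (Multiplicative.ofAdd (1 : ZMod n))) :
    f = g := by
  refine MonoidHom.ext fun x => ?_
  have hx : x = (Multiplicative.ofAdd (1 : ZMod n)) ^ ZMod.val (Multiplicative.toAdd x) := by
    conv_lhs => rw [← ofAdd_toAdd x]
    rw [← ofAdd_nsmul, nsmul_eq_mul, mul_one, ZMod.natCast_val, ZMod.cast_id]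
  rw [hx, map_pow, map_pow, h]

/-- `Mp(2,ℤ)` is the amalgamated free product `(ℤ/12ℤ) *_{ℤ/4ℤ} (ℤ/8ℤ)`, via an
isomorphism sending the generator of `ℤ/12ℤ` to `û` and the generator of `ℤ/8ℤ` to `ŝ`. -/
theorem mp2z_is_amalgamated_product
    (φ₁ : Multiplicative (ZMod 4) →* Multiplicative (ZMod 12))
    (φ₂ : Multiplicative (ZMod 4) →* Multiplicative (ZMod 8))
    (hφ₁ : Function.Injective φ₁) (hφ₂ : Function.Injective φ₂)
    (h₁ : φ₁ (Multiplicative.ofAdd (1 : ZMod 4)) = Multiplicative.ofAdd (3 : ZMod 12))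
    (h₂ : φ₂ (Multiplicative.ofAdd (1 : ZMod 4)) = Multiplicative.ofAdd (2 : ZMod 8)) :
    ∃ Ψ : Monoid.PushoutI (fam φ₁ φ₂) ≃* Mp,
      Ψ (Monoid.PushoutI.of (φ := fam φ₁ φ₂) false (Multiplicative.ofAdd (1 : ZMod 12))) = uhat ∧
      Ψ (Monoid.PushoutI.of (φ := fam φ₁ φ₂) true (Multiplicative.ofAdd (1 : ZMod 8))) = shat := by
  -- relations in Mp
  have hs8 : shat ^ 8 = 1 := by
    have hmem : ((FreeGroup.of true : FreeGroup Bool) ^ 8) ∈ Subgroup.normalClosure mpRels :=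
      Subgroup.subset_normalClosure (by left; rfl)
    have : shat ^ 8 = PresentedGroup.mk mpRels ((FreeGroup.of true) ^ 8) := by
      simp [shat, PresentedGroup.of, map_pow]
    rw [this]
    exact (QuotientGroup.eq_one_iff _).2 hmem
  have hsu : shat ^ 2 = uhat ^ 3 := by
    have hmem : ((FreeGroup.of true : FreeGroup Bool) ^ 2 * ((FreeGroup.of false) ^ 3)⁻¹)
        ∈ Subgroup.normalClosure mpRels :=
      Subgroup.subset_normalClosure (by right; rfl)
    have h0 : shat ^ 2 * (uhat ^ 3)⁻¹ = 1 := by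
      have : shat ^ 2 * (uhat ^ 3)⁻¹
          = PresentedGroup.mk mpRels ((FreeGroup.of true) ^ 2 * ((FreeGroup.of false) ^ 3)⁻¹) := by
        simp [shat, uhat, PresentedGroup.of, map_mul, map_pow, map_inv]
      rw [this]
      exact (QuotientGroup.eq_one_iff _).2 hmem
    exact (mul_inv_eq_one.mp h0)
  have hu12 : uhat ^ 12 = 1 := by
    have : uhat ^ 12 = (uhat ^ 3) ^ 4 := by rw [← pow_mul]
    rw [this, ← hsu, ← pow_mul]
    exact hs8
  have hk4 : (shat ^ 2) ^ 4 = 1 := by rw [← pow_mul]; exact hs8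
  -- map to Mp
  let f : ∀ b, Fac b →* Mp := fun b =>
    match b with
    | false => zmodMulHom 12 uhat hu12
    | true => zmodMulHom 8 shat hs8
  let k : Multiplicative (ZMod 4) →* Mp := zmodMulHom 4 (shat ^ 2) hk4
  have hf : ∀ b, (f b).comp (fam φ₁ φ₂ b) = k := by
    intro b
    cases b with
    | false =>
      apply zmodMulHom_ext
      show zmodMulHom 12 uhat hu12 (φ₁ (Multiplicative.ofAdd (1 : ZMod 4)))
          = zmodMulHom 4 (shat ^ 2) hk4 (Multiplicative.ofAdd (1 : ZMod 4))
      rw [h₁, zmodMulHom_one]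
      have : (3 : ZMod 12) = ((3 : ℕ) : ℤ) := by decide
      rw [show (Multiplicative.ofAdd (3 : ZMod 12))
          = Multiplicative.ofAdd (((3 : ℕ) : ℤ) : ZMod 12) by norm_num]
      rw [zmodMulHom_natCast]
      exact hsu.symm
    | true =>
      apply zmodMulHom_ext
      show zmodMulHom 8 shat hs8 (φ₂ (Multiplicative.ofAdd (1 : ZMod 4)))
          = zmodMulHom 4 (shat ^ 2) hk4 (Multiplicative.ofAdd (1 : ZMod 4))
      rw [h₂, zmodMulHom_one]
      rw [show (Multiplicative.ofAdd (2 : ZMod 8))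
          = Multiplicative.ofAdd (((2 : ℕ) : ℤ) : ZMod 8) by norm_num]
      rw [zmodMulHom_natCast]
  let Φ : Monoid.PushoutI (fam φ₁ φ₂) →* Mp := Monoid.PushoutI.lift f k hf
  -- map from Mp
  let gen : Bool → Monoid.PushoutI (fam φ₁ φ₂) := fun b =>
    match b with
    | false => Monoid.PushoutI.of (φ := fam φ₁ φ₂) false (Multiplicative.ofAdd (1 : ZMod 12))
    | true => Monoid.PushoutI.of (φ := fam φ₁ φ₂) true (Multiplicative.ofAdd (1 : ZMod 8))
  have hgen : ∀ r ∈ mpRels, FreeGroup.lift gen r = 1 := by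
    intro r hr
    have key : (gen true) ^ 2 = (gen false) ^ 3 := by
      show (Monoid.PushoutI.of (φ := fam φ₁ φ₂) true (Multiplicative.ofAdd (1 : ZMod 8))) ^ 2
          = (Monoid.PushoutI.of (φ := fam φ₁ φ₂) false (Multiplicative.ofAdd (1 : ZMod 12))) ^ 3
      refine ((map_pow _ _ _).symm.trans ?_).trans (map_pow _ _ _)
      show (Monoid.PushoutI.of (φ := fam φ₁ φ₂) true (Multiplicative.ofAdd (2 : ZMod 8)))
          = Monoid.PushoutI.of (φ := fam φ₁ φ₂) false (Multiplicative.ofAdd (3 : ZMod 12))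
      have t2 := Monoid.PushoutI.of_apply_eq_base (fam φ₁ φ₂) true
        (Multiplicative.ofAdd (1 : ZMod 4))
      have t1 := Monoid.PushoutI.of_apply_eq_base (fam φ₁ φ₂) false
        (Multiplicative.ofAdd (1 : ZMod 4))
      have c2 : (Monoid.PushoutI.of (φ := fam φ₁ φ₂) true) (φ₂ (Multiplicative.ofAdd (1 : ZMod 4)))
          = (Monoid.PushoutI.of (φ := fam φ₁ φ₂) true) (Multiplicative.ofAdd (2 : ZMod 8)) :=
        congrArg _ h₂
      have c1 : (Monoid.PushoutI.of (φ := fam φ₁ φ₂) false) (φ₁ (Multiplicative.ofAdd (1 : ZMod 4)))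
          = (Monoid.PushoutI.of (φ := fam φ₁ φ₂) false) (Multiplicative.ofAdd (3 : ZMod 12)) :=
        congrArg _ h₁
      exact c2.symm.trans (t2.trans (t1.symm.trans c1))
    have key8 : (gen true) ^ 8 = 1 := by
      show (Monoid.PushoutI.of (φ := fam φ₁ φ₂) true (Multiplicative.ofAdd (1 : ZMod 8))) ^ 8 = 1
      refine (map_pow _ _ _).symm.trans ?_
      show (Monoid.PushoutI.of (φ := fam φ₁ φ₂) true (1 : Fac true)) = 1
      exact map_one _
    rcases hr with h | h
    · rw [h]; simpa using key8
    · rw [h]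
      simp only [map_mul, map_inv, map_pow, FreeGroup.lift_apply_of]
      rw [key]
      simp
  let Θ : Mp →* Monoid.PushoutI (fam φ₁ φ₂) := PresentedGroup.toGroup hgen
  have hΦgen : ∀ b, Φ (gen b) = PresentedGroup.of b := by
    intro b
    cases b with
    | false =>
      show Φ (Monoid.PushoutI.of (φ := fam φ₁ φ₂) false (Multiplicative.ofAdd (1 : ZMod 12)))
          = PresentedGroup.of false
      refine (Monoid.PushoutI.lift_of f k hf _).trans ?_
      exact zmodMulHom_one 12 uhat hu12
    | true =>
      show Φ (Monoid.PushoutI.of (φ := fam φ₁ φ₂) true (Multiplicative.ofAdd (1 : ZMod 8)))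
          = PresentedGroup.of true
      refine (Monoid.PushoutI.lift_of f k hf _).trans ?_
      exact zmodMulHom_one 8 shat hs8
  have hΘΦ : Θ.comp Φ = MonoidHom.id _ := by
    apply Monoid.PushoutI.hom_ext_nonempty
    intro b
    cases b with
    | false =>
      apply zmodMulHom_ext (n := 12)
      show Θ (Φ (Monoid.PushoutI.of (φ := fam φ₁ φ₂) false (Multiplicative.ofAdd (1 : ZMod 12))))
          = Monoid.PushoutI.of (φ := fam φ₁ φ₂) false (Multiplicative.ofAdd (1 : ZMod 12))
      rw [hΦgen false]
      exact PresentedGroup.toGroup.of hgen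
    | true =>
      apply zmodMulHom_ext (n := 8)
      show Θ (Φ (Monoid.PushoutI.of (φ := fam φ₁ φ₂) true (Multiplicative.ofAdd (1 : ZMod 8))))
          = Monoid.PushoutI.of (φ := fam φ₁ φ₂) true (Multiplicative.ofAdd (1 : ZMod 8))
      rw [hΦgen true]
      exact PresentedGroup.toGroup.of hgen
  have hΦΘ : Φ.comp Θ = MonoidHom.id _ := by
    apply PresentedGroup.ext
    intro b
    show Φ (Θ (PresentedGroup.of b)) = PresentedGroup.of b
    rw [show Θ (PresentedGroup.of b) = gen b from PresentedGroup.toGroup.of hgen]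
    exact hΦgen b
  refine ⟨MonoidHom.toMulEquiv Φ Θ hΘΦ hΦΘ, ?_, ?_⟩
  · exact hΦgen false
  · exact hΦgen true
end

section
/- In the metaplectic group Mp(2,ℤ), the generator ŝ has order exactly 8, the generator û has order exactly 12, ŝ⁴ = û⁶, and ŝ⁴ lies in the center of Mp(2,ℤ); in particular Mp(2,ℤ) contains a central element of order 2. -/
lemma mp_rel_one {r : FreeGroup Bool} (hr : r ∈ mpRels) :
    PresentedGroup.mk mpRels r = 1 := by
  have : r ∈ Subgroup.normalClosure mpRels := Subgroup.subset_normalClosure hr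
  exact (QuotientGroup.eq_one_iff r).mpr this

lemma shat_pow_eight : shat ^ 8 = 1 := by
  have := mp_rel_one (r := (FreeGroup.of true) ^ 8) (Or.inl rfl)
  simpa [shat, PresentedGroup.of] using this

lemma shat_sq : shat ^ 2 = uhat ^ 3 := by
  have := mp_rel_one (r := (FreeGroup.of true) ^ 2 * ((FreeGroup.of false) ^ 3)⁻¹)
    (Or.inr rfl)
  simp only [map_mul, map_pow, map_inv] at this
  have h : (PresentedGroup.mk mpRels (FreeGroup.of true)) ^ 2 =
      (PresentedGroup.mk mpRels (FreeGroup.of false)) ^ 3 := by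
    rw [← mul_inv_eq_one]; exact this
  simpa [shat, uhat, PresentedGroup.of] using h

/-- The map to `Multiplicative (ZMod 24)` sending `û ↦ 2`, `ŝ ↦ 3`. -/
def mpF : Bool → Multiplicative (ZMod 24) :=
  fun b => Multiplicative.ofAdd (if b then 3 else 2)

lemma mpF_rels : ∀ r ∈ mpRels, FreeGroup.lift mpF r = 1 := by
  intro r hr
  rcases hr with h | h <;> subst h <;> simp [mpF] <;> decide

/-- The homomorphism `Mp → Multiplicative (ZMod 24)`. -/
def mpφ : Mp →* Multiplicative (ZMod 24) := PresentedGroup.toGroup mpF_rels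

lemma uhat_pow_twelve : uhat ^ 12 = 1 := by
  have h : uhat ^ 12 = (uhat ^ 3) ^ 4 := by rw [← pow_mul]
  rw [h, ← shat_sq, ← pow_mul]
  exact shat_pow_eight

lemma orderOf_shat : orderOf shat = 8 := by
  have h1 : orderOf shat ∣ 8 := orderOf_dvd_of_pow_eq_one shat_pow_eight
  have h2 : orderOf (mpφ shat) ∣ orderOf shat := orderOf_map_dvd mpφ shat
  have h3 : orderOf (mpφ shat) = 8 := by
    have : mpφ shat = Multiplicative.ofAdd (3 : ZMod 24) := by
      simp [mpφ, shat, mpF, PresentedGroup.toGroup.of]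
    rw [this, orderOf_ofAdd_eq_addOrderOf]
    have : (3 : ZMod 24) = ((3 : ℕ) : ZMod 24) := by norm_num
    rw [this, ZMod.addOrderOf_coe 3 (by norm_num)]
    decide
  rw [h3] at h2
  exact Nat.dvd_antisymm h1 h2

lemma orderOf_uhat : orderOf uhat = 12 := by
  have h1 : orderOf uhat ∣ 12 := orderOf_dvd_of_pow_eq_one uhat_pow_twelve
  have h2 : orderOf (mpφ uhat) ∣ orderOf uhat := orderOf_map_dvd mpφ uhat
  have h3 : orderOf (mpφ uhat) = 12 := by
    have : mpφ uhat = Multiplicative.ofAdd (2 : ZMod 24) := by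
      simp [mpφ, uhat, mpF, PresentedGroup.toGroup.of]
    rw [this, orderOf_ofAdd_eq_addOrderOf]
    have : (2 : ZMod 24) = ((2 : ℕ) : ZMod 24) := by norm_num
    rw [this, ZMod.addOrderOf_coe 2 (by norm_num)]
    decide
  rw [h3] at h2
  exact Nat.dvd_antisymm h1 h2

lemma shat4_eq_uhat6 : shat ^ 4 = uhat ^ 6 := by
  have : shat ^ 4 = (shat ^ 2) ^ 2 := by rw [← pow_mul]
  rw [this, shat_sq, ← pow_mul]

lemma shat4_central : shat ^ 4 ∈ Subgroup.center Mp := by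
  rw [Subgroup.mem_center_iff]
  intro g
  refine PresentedGroup.generated_by mpRels
    { carrier := {g | g * shat ^ 4 = shat ^ 4 * g},
      one_mem' := by simp,
      mul_mem' := by
              intro a b ha hb
              simp only [Set.mem_setOf_eq] at *
              rw [mul_assoc, hb, ← mul_assoc, ha, mul_assoc],
      inv_mem' := by
              intro a ha
              simp only [Set.mem_setOf_eq] at *
              calc a⁻¹ * shat ^ 4 = a⁻¹ * (shat ^ 4 * a) * a⁻¹ := by group
                _ = a⁻¹ * (a * shat ^ 4) * a⁻¹ := by rw [← ha]
                _ = shat ^ 4 * a⁻¹ := by group }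
    (fun j => by
      cases j with
      | false =>
        show (uhat : Mp) * shat ^ 4 = shat ^ 4 * uhat
        rw [shat4_eq_uhat6, ← pow_succ, ← pow_succ']
      | true =>
        show (shat : Mp) * shat ^ 4 = shat ^ 4 * shat
        rw [← pow_succ, ← pow_succ']) g

/-- In `Mp(2,ℤ)`: `ŝ` has order exactly `8`, `û` has order exactly `12`, `ŝ⁴ = û⁶`,
`ŝ⁴` is central; in particular `Mp(2,ℤ)` contains a central element of order `2`. -/
theorem mp2z_orders_and_center :
    orderOf shat = 8 ∧ orderOf uhat = 12 ∧ shat ^ 4 = uhat ^ 6 ∧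
    shat ^ 4 ∈ Subgroup.center Mp ∧
    ∃ z ∈ Subgroup.center Mp, orderOf z = 2 := by
  refine ⟨orderOf_shat, orderOf_uhat, shat4_eq_uhat6, shat4_central,
    shat ^ 4, shat4_central, ?_⟩
  have h2 : (shat ^ 4) ^ 2 = 1 := by rw [← pow_mul]; exact shat_pow_eight
  have hne : shat ^ 4 ≠ 1 := by
    intro h
    have := orderOf_dvd_of_pow_eq_one h
    rw [orderOf_shat] at this
    omega
  exact orderOf_eq_prime h2 hne
end

section
/- The abelianization of SL(2,ℤ) is cyclic of order 12: there is a group isomorphism Abelianization SL(2,ℤ) ≃ ℤ/12ℤ taking the class of T = !![1,1; 0,1] to a generator. -/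
open Matrix MatrixGroups Subgroup

-- homs mod 3 and 4 (defined above in real file)
def fThree (g : SL(2, ZMod 3)) : ZMod 3 :=
  g 1 0 * g 1 1 + g 0 1 * g 1 1 + 2 * g 0 1 * g 1 0 ^ 2 * g 1 1 + g 0 0 * g 1 0

def fFour (g : SL(2, ZMod 4)) : ZMod 4 :=
  1 + g 0 1 * g 1 1 + g 0 1 * g 1 0 + g 0 1 * g 1 0 * g 1 1 + g 0 1 * g 1 0 ^ 2
    + g 0 0 * g 1 0 + 2 * g 1 0 + 3 * g 1 1

set_option maxRecDepth 100000 in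
theorem fThree_hom : ∀ g h : SL(2, ZMod 3), fThree (g * h) = fThree g + fThree h := by
  decide

set_option maxRecDepth 1000000 in
theorem fFour_hom : ∀ g h : SL(2, ZMod 4), fFour (g * h) = fFour g + fFour h := by
  decide


lemma mem_closure_S_T (g : SL(2,ℤ)) :
    g ∈ Subgroup.closure ({ModularGroup.S, ModularGroup.T} : Set SL(2,ℤ)) := by
  set C := Subgroup.closure ({ModularGroup.S, ModularGroup.T} : Set SL(2,ℤ)) with hC
  have hS : ModularGroup.S ∈ C := subset_closure (by simp)
  have hT : ModularGroup.T ∈ C := subset_closure (by simp)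
  suffices H : ∀ n (g : SL(2,ℤ)), (g 1 0).natAbs = n → g ∈ C from H _ g rfl
  intro n
  induction n using Nat.strong_induction_on with
  | _ n ih =>
    intro g hg
    by_cases hc : g 1 0 = 0
    · have hdet : g.1.det = 1 := g.2
      rw [Matrix.det_fin_two] at hdet
      rw [show g.1 1 0 = g 1 0 from rfl, hc, mul_zero, sub_zero] at hdet
      rcases Int.mul_eq_one_iff_eq_one_or_neg_one.mp hdet with ⟨ha, hd⟩ | ⟨ha, hd⟩
      · have : g = ModularGroup.T ^ (g 0 1) := by
          ext i j
          rw [ModularGroup.coe_T_zpow]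
          fin_cases i <;> fin_cases j <;> simp [ha, hd, hc]
        rw [this]; exact zpow_mem hT _
      · have : g = ModularGroup.S ^ 2 * ModularGroup.T ^ (-(g 0 1)) := by
          have h2 : (ModularGroup.S ^ 2 : SL(2,ℤ)).1 = -1 := by
            rw [pow_two, Matrix.SpecialLinearGroup.coe_mul, ModularGroup.S_mul_S_eq]
          ext i j
          rw [Matrix.SpecialLinearGroup.coe_mul, h2, ModularGroup.coe_T_zpow]
          fin_cases i <;> fin_cases j <;>
            simp [ha, hd, hc, Matrix.mul_apply, Fin.sum_univ_succ, Matrix.neg_apply,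
              Matrix.one_apply]
        rw [this]
        exact mul_mem (pow_mem hS 2) (zpow_mem hT _)
    · set a := g 0 0 with ha
      set c := g 1 0 with hcdef
      set q := a / c with hq
      set g' := ModularGroup.S * (ModularGroup.T ^ (-q) * g) with hg'
      have hentry : g' 1 0 = a % c := by
        have hcoe : g'.1 = ModularGroup.S.1 * (!![1, -q; 0, 1] * g.1) := by
          rw [hg', Matrix.SpecialLinearGroup.coe_mul, Matrix.SpecialLinearGroup.coe_mul,
            ModularGroup.coe_T_zpow]
        rw [show g' 1 0 = g'.1 1 0 from rfl, hcoe, Matrix.eta_fin_two g.1, ModularGroup.coe_S,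
          Int.emod_def]
        simp [Matrix.mul_fin_two]
        ring
      have hlt : (g' 1 0).natAbs < n := by
        rw [hentry, ← hg]
        have h1 : 0 ≤ a % c := Int.emod_nonneg a hc
        have h2 : a % c < |c| := by have := Int.emod_lt a hc; rwa [Int.abs_eq_natAbs]
        rw [Int.abs_eq_natAbs] at h2; omega
      have hmem : g' ∈ C := ih _ hlt g' rfl
      have : g = ModularGroup.T ^ q * (ModularGroup.S⁻¹ * g') := by
        rw [hg']; group
      rw [this]
      exact mul_mem (zpow_mem hT _) (mul_mem (inv_mem hS) hmem)

/-- The matrix `T = !![1,1; 0,1]` as an element of `SL(2,ℤ)`. -/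
def T : Matrix.SpecialLinearGroup (Fin 2) ℤ :=
  ⟨!![1, 1; 0, 1], by norm_num [Matrix.det_fin_two_of]⟩

def e4 : ZMod 4 →+ ZMod 12 where
  toFun x := 3 * x.val
  map_zero' := by decide
  map_add' := by decide

def e3 : ZMod 3 →+ ZMod 12 where
  toFun x := 4 * x.val
  map_zero' := by decide
  map_add' := by decide

def rho4 : SL(2,ℤ) →* SL(2, ZMod 4) :=
  Matrix.SpecialLinearGroup.map (Int.castRingHom (ZMod 4))
def rho3 : SL(2,ℤ) →* SL(2, ZMod 3) :=
  Matrix.SpecialLinearGroup.map (Int.castRingHom (ZMod 3))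

theorem fFour_one : fFour 1 = 0 := by decide
theorem fThree_one : fThree 1 = 0 := by decide

def phi : SL(2,ℤ) →* Multiplicative (ZMod 12) where
  toFun g := Multiplicative.ofAdd (e4 (fFour (rho4 g)) + e3 (fThree (rho3 g)))
  map_one' := by
    simp only [_root_.map_one, fFour_one, fThree_one, _root_.map_zero, add_zero, ofAdd_zero]
  map_mul' g h := by
    simp only [_root_.map_mul, fFour_hom, fThree_hom, _root_.map_add, ← ofAdd_add]
    congr 1
    ring

theorem phi_T : phi T = Multiplicative.ofAdd (7 : ZMod 12) := by decide

theorem zpowers_seven : Subgroup.zpowers (Multiplicative.ofAdd (7 : ZMod 12)) = ⊤ := by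
  rw [Subgroup.eq_top_iff']
  intro x
  rw [Subgroup.mem_zpowers_iff]
  refine ⟨((7 * x.toAdd).val : ℤ), ?_⟩
  have h : ∀ m : ℤ, (Multiplicative.ofAdd (7 : ZMod 12)) ^ m
      = Multiplicative.ofAdd ((m : ZMod 12) * 7) := by
    intro m
    rw [← ofAdd_zsmul, zsmul_eq_mul]
  rw [h]
  push_cast [ZMod.natCast_val, ZMod.intCast_cast, ZMod.cast_id]
  rw [show ∀ y : ZMod 12, 7 * y * 7 = y by decide, ofAdd_toAdd]



instance : DecidableEq (Matrix.SpecialLinearGroup (Fin 2) ℤ) :=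
  fun a b => decidable_of_iff (a.1 = b.1) Subtype.ext_iff.symm

/-- The abelianization of `SL(2,ℤ)` is cyclic of order `12`: there is an isomorphism
onto `ℤ/12ℤ` taking the class of `T` to a generator. -/
theorem abelianization_sl2z :
    ∃ Ψ : Abelianization (Matrix.SpecialLinearGroup (Fin 2) ℤ) ≃* Multiplicative (ZMod 12),
      Subgroup.zpowers (Ψ (Abelianization.of T)) = ⊤ := by
  set A := Abelianization (Matrix.SpecialLinearGroup (Fin 2) ℤ)
  set t : A := Abelianization.of T with ht
  set s : A := Abelianization.of ModularGroup.S with hs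
  have hTT : ModularGroup.T = T := rfl
  -- relations
  have hS4 : (ModularGroup.S : SL(2,ℤ))^4 = 1 := by decide
  have hST : (ModularGroup.S * T)^3 = ModularGroup.S^2 := by decide
  have hs4 : s^4 = 1 := by
    rw [hs, ← _root_.map_pow, hS4, _root_.map_one]
  have hrel : (s * t)^3 = s^2 := by
    rw [hs, ht, ← _root_.map_mul, ← _root_.map_pow, ← _root_.map_pow, hST]
  have ht3 : t^3 = s⁻¹ := by
    have h := hrel
    rw [mul_pow] at h
    have h2 : t^3 = (s^3)⁻¹ * s^2 := by rw [← h]; group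
    rw [h2]; group
  have ht12 : t^12 = 1 := by
    have : t^12 = (t^3)^4 := by group
    rw [this, ht3, inv_pow, hs4, inv_one]
  -- generation
  have hgen : Subgroup.zpowers t = ⊤ := by
    rw [eq_top_iff]
    have hcl : Subgroup.closure ({s, t} : Set A) = ⊤ := by
      have h1 : Subgroup.closure ({ModularGroup.S, ModularGroup.T} : Set SL(2,ℤ)) = ⊤ := by
        rw [eq_top_iff']
        exact mem_closure_S_T
      have h2 := congrArg (Subgroup.map (Abelianization.of
        (G := Matrix.SpecialLinearGroup (Fin 2) ℤ))) h1
      rw [MonoidHom.map_closure] at h2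
      have h3 : Subgroup.map (Abelianization.of) (⊤ : Subgroup SL(2,ℤ)) = ⊤ := by
        rw [← MonoidHom.range_eq_map, MonoidHom.range_eq_top]
        exact fun x => Quotient.exists_rep x
      rw [h3] at h2
      rw [← h2]
      congr 1
      rw [Set.image_pair, hTT]
    rw [← hcl]
    rw [Subgroup.closure_le]
    intro x hx
    simp only [Set.mem_insert_iff, Set.mem_singleton_iff] at hx
    rcases hx with rfl | rfl
    · have : s = (t^3)⁻¹ := by rw [ht3, inv_inv]
      rw [this]
      exact inv_mem (pow_mem (Subgroup.mem_zpowers t) 3)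
    · exact Subgroup.mem_zpowers t
  -- the hom
  set Φ : A →* Multiplicative (ZMod 12) := Abelianization.lift phi with hΦ
  have hΦt : Φ t = Multiplicative.ofAdd (7 : ZMod 12) := by
    rw [ht, hΦ, Abelianization.lift_apply_of, phi_T]
  have hsurj : Function.Surjective Φ := by
    rw [← MonoidHom.range_eq_top]
    rw [eq_top_iff, ← zpowers_seven, ← hΦt]
    rintro x ⟨n, rfl⟩
    exact ⟨t^n, by rw [map_zpow]⟩
  -- cardinality
  have hfinord : IsOfFinOrder t := isOfFinOrder_iff_pow_eq_one.mpr ⟨12, by norm_num, ht12⟩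
  have hcardA : Nat.card A = orderOf t := by
    rw [← Nat.card_zpowers, hgen, Subgroup.card_top]
  have hfinA : Finite A := by
    have : 0 < Nat.card A := by rw [hcardA]; exact hfinord.orderOf_pos
    exact (Nat.card_pos_iff.mp this).2
  have hdvd : orderOf t ∣ 12 := orderOf_dvd_of_pow_eq_one ht12
  have hle : Nat.card (Multiplicative (ZMod 12)) ≤ Nat.card A :=
    Nat.card_le_card_of_surjective Φ hsurj
  have hc12 : Nat.card (Multiplicative (ZMod 12)) = 12 := by
    rw [Nat.card_eq_fintype_card]; rfl
  have hcard : Nat.card A = Nat.card (Multiplicative (ZMod 12)) := by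
    rw [hc12, hcardA]
    have h1 : orderOf t ≤ 12 := Nat.le_of_dvd (by norm_num) hdvd
    rw [hc12, hcardA] at hle
    omega
  have hbij : Function.Bijective Φ :=
    (Nat.bijective_iff_surjective_and_card ⇑Φ).mpr ⟨hsurj, hcard⟩
  refine ⟨MulEquiv.ofBijective Φ hbij, ?_⟩
  show Subgroup.zpowers (Φ t) = ⊤
  rw [hΦt, zpowers_seven]
end

section
/- There are integers m₁ and m₂ such that −(1/((2i)³·4)) · Σ_{ℓ=1}^{3} e^{−3πiℓ/4}/sin(πℓ/4)³ = −3/32 + m₁ and −(1/((2i)³·4)) · Σ_{ℓ=1}^{3} e^{−3πiℓ/4}·(6cos(πℓ/2) − 1)/sin(πℓ/4)³ = −3/32 + m₂. (This is the statement that on the lens space L̃⁵₄ — the lens space L⁵₄(1,1,1) with its other Spin-ℤ/8ℤ structure, i.e., charge q = 3/2 — one has η^D_{3/2} ≡ −3/32 and η^RS_{3/2} ≡ −3/32 (mod ℤ).) -/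
/-- On the lens space `L̃⁵₄` (i.e. `L⁵₄(1,1,1)` with its other Spin-ℤ/8ℤ structure,
charge `q = 3/2`) one has `η^D_{3/2} ≡ −3/32` and `η^RS_{3/2} ≡ −3/32` modulo `ℤ`. -/
theorem eta_L5_4_tilde : ∃ m₁ m₂ : ℤ,
    -(1 / ((2 * Complex.I) ^ 3 * 4)) *
        ∑ ℓ ∈ Finset.Icc (1 : ℕ) 3,
          Complex.exp (-(3 * (Real.pi : ℂ)) * Complex.I * (ℓ : ℂ) / 4) /
            ((Real.sin (Real.pi * (ℓ : ℝ) / 4) : ℂ)) ^ 3 =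
      -(3 / 32) + (m₁ : ℂ) ∧
    -(1 / ((2 * Complex.I) ^ 3 * 4)) *
        ∑ ℓ ∈ Finset.Icc (1 : ℕ) 3,
          Complex.exp (-(3 * (Real.pi : ℂ)) * Complex.I * (ℓ : ℂ) / 4) *
              (6 * (Real.cos (Real.pi * (ℓ : ℝ) / 2) : ℂ) - 1) /
            ((Real.sin (Real.pi * (ℓ : ℝ) / 4) : ℂ)) ^ 3 =
      -(3 / 32) + (m₂ : ℂ) := by
  refine ⟨0, 0, ?_, ?_⟩ <;>
  · rw [show Finset.Icc (1:ℕ) 3 = {1,2,3} from by decide]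
    have hexp : ∀ r : ℝ, Complex.exp ((r:ℂ)*Complex.I)
        = (Real.cos r : ℂ) + (Real.sin r : ℂ)*Complex.I := fun r => by
      rw [Complex.exp_mul_I, Complex.ofReal_cos, Complex.ofReal_sin]
    have e1 : Complex.exp (-(3 * (Real.pi : ℂ)) * Complex.I * (1 : ℂ) / 4)
        = (Real.cos (-(3*Real.pi)/4) : ℂ) + (Real.sin (-(3*Real.pi)/4) : ℂ)*Complex.I := by
      rw [show -(3 * (Real.pi : ℂ)) * Complex.I * (1 : ℂ) / 4
          = ((-(3*Real.pi)/4 : ℝ) : ℂ) * Complex.I by push_cast; ring, hexp]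
    have e2 : Complex.exp (-(3 * (Real.pi : ℂ)) * Complex.I * (2 : ℂ) / 4)
        = (Real.cos (-(3*Real.pi)/2) : ℂ) + (Real.sin (-(3*Real.pi)/2) : ℂ)*Complex.I := by
      rw [show -(3 * (Real.pi : ℂ)) * Complex.I * (2 : ℂ) / 4
          = ((-(3*Real.pi)/2 : ℝ) : ℂ) * Complex.I by push_cast; ring, hexp]
    have e3 : Complex.exp (-(3 * (Real.pi : ℂ)) * Complex.I * (3 : ℂ) / 4)
        = (Real.cos (-(9*Real.pi)/4) : ℂ) + (Real.sin (-(9*Real.pi)/4) : ℂ)*Complex.I := by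
      rw [show -(3 * (Real.pi : ℂ)) * Complex.I * (3 : ℂ) / 4
          = ((-(9*Real.pi)/4 : ℝ) : ℂ) * Complex.I by push_cast; ring, hexp]
    have c1 : Real.cos (-(3*Real.pi)/4) = -(Real.sqrt 2/2) := by
      rw [show -(3*Real.pi)/4 = -(Real.pi - Real.pi/4) by ring, Real.cos_neg,
        Real.cos_pi_sub, Real.cos_pi_div_four]
    have s1 : Real.sin (-(3*Real.pi)/4) = -(Real.sqrt 2/2) := by
      rw [show -(3*Real.pi)/4 = -(Real.pi - Real.pi/4) by ring, Real.sin_neg,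
        Real.sin_pi_sub, Real.sin_pi_div_four]
    have c2 : Real.cos (-(3*Real.pi)/2) = 0 := by
      rw [show -(3*Real.pi)/2 = -(Real.pi + Real.pi/2) by ring, Real.cos_neg,
        Real.cos_add, Real.cos_pi_div_two, Real.sin_pi_div_two]
      simp
    have s2 : Real.sin (-(3*Real.pi)/2) = 1 := by
      rw [show -(3*Real.pi)/2 = -(Real.pi + Real.pi/2) by ring, Real.sin_neg,
        Real.sin_add, Real.cos_pi_div_two, Real.sin_pi_div_two, Real.cos_pi]
      simp
    have c3 : Real.cos (-(9*Real.pi)/4) = Real.sqrt 2/2 := by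
      rw [show -(9*Real.pi)/4 = -(Real.pi/4) + (-1 : ℤ) * (2*Real.pi) by push_cast; ring,
        Real.cos_add_int_mul_two_pi, Real.cos_neg, Real.cos_pi_div_four]
    have s3 : Real.sin (-(9*Real.pi)/4) = -(Real.sqrt 2/2) := by
      rw [show -(9*Real.pi)/4 = -(Real.pi/4) + (-1 : ℤ) * (2*Real.pi) by push_cast; ring,
        Real.sin_add_int_mul_two_pi, Real.sin_neg, Real.sin_pi_div_four]
    have d1 : Real.sin (Real.pi * (1:ℕ) / 4) = Real.sqrt 2/2 := by
      push_cast; rw [show Real.pi * 1 / 4 = Real.pi/4 by ring, Real.sin_pi_div_four]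
    have d2 : Real.sin (Real.pi * (2:ℕ) / 4) = 1 := by
      push_cast; rw [show Real.pi * 2 / 4 = Real.pi/2 by ring, Real.sin_pi_div_two]
    have d3 : Real.sin (Real.pi * (3:ℕ) / 4) = Real.sqrt 2/2 := by
      push_cast; rw [show Real.pi * 3 / 4 = Real.pi - Real.pi/4 by ring,
        Real.sin_pi_sub, Real.sin_pi_div_four]
    have g1 : Real.cos (Real.pi * (1:ℕ) / 2) = 0 := by
      push_cast; rw [show Real.pi * 1 / 2 = Real.pi/2 by ring, Real.cos_pi_div_two]
    have g2 : Real.cos (Real.pi * (2:ℕ) / 2) = -1 := by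
      push_cast; rw [show Real.pi * 2 / 2 = Real.pi by ring, Real.cos_pi]
    have g3 : Real.cos (Real.pi * (3:ℕ) / 2) = 0 := by
      push_cast; rw [show Real.pi * 3 / 2 = Real.pi + Real.pi/2 by ring,
        Real.cos_add, Real.cos_pi_div_two, Real.sin_pi_div_two, Real.sin_pi]; ring
    have hs : ((Real.sqrt 2 : ℝ) : ℂ)^2 = 2 := by
      rw [← Complex.ofReal_pow, Real.sq_sqrt (by norm_num)]; norm_num
    have hsne : ((Real.sqrt 2 : ℝ) : ℂ) ≠ 0 := by
      simp [Real.sqrt_eq_zero']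
    rw [Finset.sum_insert (by decide), Finset.sum_insert (by decide), Finset.sum_singleton,
      d1, d2, d3]
    try rw [g1, g2, g3]
    simp only [Nat.cast_one, Nat.cast_ofNat]
    rw [e1, e2, e3, c1, s1, c2, s2, c3, s3]
    have hI : Complex.I^2 = -1 := Complex.I_sq
    push_cast
    field_simp
    ring_nf
    have h6 : ((Real.sqrt 2 : ℝ) : ℂ)^6 = 8 := by
      rw [show ((Real.sqrt 2 : ℝ) : ℂ)^6 = (((Real.sqrt 2 : ℝ) : ℂ)^2)^3 by ring, hs]; norm_num
    have h4 : ((Real.sqrt 2 : ℝ) : ℂ)^4 = 4 := by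
      rw [show ((Real.sqrt 2 : ℝ) : ℂ)^4 = (((Real.sqrt 2 : ℝ) : ℂ)^2)^2 by ring, hs]; norm_num
    rw [hs]
    linear_combination (192*Complex.I) * hI
end

section
/- There are integers m₁ and m₂ such that −(1/((2i)³·3)) · Σ_{ℓ=1}^{2} e^{−πiℓ/3}/(sin(πℓ/3)·sin(−πℓ/3)·sin(πℓ/3)) = 1/9 + m₁ and −(1/((2i)³·3)) · Σ_{ℓ=1}^{2} e^{−πiℓ/3}/sin(πℓ/3)³ = −1/9 + m₂. (This is the statement that η^D_{1/2}(L⁵₃(1,−1,1)) ≡ 1/9 and η^D_{1/2}(L⁵₃(1,1,1)) ≡ −1/9 (mod ℤ); consequently 8·[L⁵₃(1,−1,1)] and [L⁵₃(1,1,1)] have the same value of this ℤ/9ℤ-valued bordism invariant.) -/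
lemma exp_aux (x : ℕ) : Complex.exp (-(Real.pi : ℂ) * Complex.I * (x : ℂ) / 3)
    = (Real.cos (Real.pi * (x : ℝ) / 3) : ℂ) - (Real.sin (Real.pi * (x : ℝ) / 3) : ℂ) * Complex.I := by
  have h : -(Real.pi : ℂ) * Complex.I * (x : ℂ) / 3
      = ((-(Real.pi * (x : ℝ) / 3) : ℝ) : ℂ) * Complex.I := by
    push_cast; ring
  rw [h, Complex.exp_mul_I, Complex.ofReal_neg, Complex.cos_neg, Complex.sin_neg,
    ← Complex.ofReal_cos, ← Complex.ofReal_sin]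
  ring

/-- `η^D_{1/2}(L⁵₃(1,−1,1)) ≡ 1/9` and `η^D_{1/2}(L⁵₃(1,1,1)) ≡ −1/9` modulo `ℤ`. -/
theorem eta_L5_3 : ∃ m₁ m₂ : ℤ,
    -(1 / ((2 * Complex.I) ^ 3 * 3)) *
        ∑ ℓ ∈ Finset.Icc (1 : ℕ) 2,
          Complex.exp (-(Real.pi : ℂ) * Complex.I * (ℓ : ℂ) / 3) /
            ((Real.sin (Real.pi * (ℓ : ℝ) / 3) : ℂ) *
              (Real.sin (-(Real.pi * (ℓ : ℝ)) / 3) : ℂ) *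
              (Real.sin (Real.pi * (ℓ : ℝ) / 3) : ℂ)) =
      1 / 9 + (m₁ : ℂ) ∧
    -(1 / ((2 * Complex.I) ^ 3 * 3)) *
        ∑ ℓ ∈ Finset.Icc (1 : ℕ) 2,
          Complex.exp (-(Real.pi : ℂ) * Complex.I * (ℓ : ℂ) / 3) /
            ((Real.sin (Real.pi * (ℓ : ℝ) / 3) : ℂ)) ^ 3 =
      -(1 / 9) + (m₂ : ℂ) := by
  refine ⟨0, 0, ?_, ?_⟩ <;>
  · rw [show Finset.Icc (1 : ℕ) 2 = {1, 2} from rfl]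
    rw [Finset.sum_insert (by decide), Finset.sum_singleton]
    have h1 : Real.sin (Real.pi * (1 : ℕ) / 3) = Real.sqrt 3 / 2 := by
      norm_num [Real.sin_pi_div_three]
    have h2 : Real.sin (Real.pi * (2 : ℕ) / 3) = Real.sqrt 3 / 2 := by
      have : Real.pi * (2 : ℕ) / 3 = Real.pi - Real.pi / 3 := by push_cast; ring
      rw [this, Real.sin_pi_sub, Real.sin_pi_div_three]
    have h1' : Real.sin (-(Real.pi * (1 : ℕ)) / 3) = -(Real.sqrt 3 / 2) := by
      rw [show -(Real.pi * (1:ℕ)) / 3 = -(Real.pi * (1:ℕ) / 3) by ring, Real.sin_neg, h1]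
    have h2' : Real.sin (-(Real.pi * (2 : ℕ)) / 3) = -(Real.sqrt 3 / 2) := by
      rw [show -(Real.pi * (2:ℕ)) / 3 = -(Real.pi * (2:ℕ) / 3) by ring, Real.sin_neg, h2]
    have c1 : Real.cos (Real.pi * (1 : ℕ) / 3) = 1 / 2 := by
      norm_num [Real.cos_pi_div_three]
    have c2 : Real.cos (Real.pi * (2 : ℕ) / 3) = -(1 / 2) := by
      have : Real.pi * (2 : ℕ) / 3 = Real.pi - Real.pi / 3 := by push_cast; ring
      rw [this, Real.cos_pi_sub, Real.cos_pi_div_three]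
    simp only [exp_aux, h1, h2, h1', h2', c1, c2]
    have hs : ((Real.sqrt 3 : ℝ) : ℂ) ^ 2 = 3 := by
      norm_cast; rw [Real.sq_sqrt]; norm_num
    have hs0 : ((Real.sqrt 3 : ℝ) : ℂ) ≠ 0 := by
      intro h
      rw [h] at hs; norm_num at hs
    push_cast
    field_simp [Complex.I_ne_zero]
    first
    | rw [div_eq_one_iff_eq (by simp [Complex.I_ne_zero, hs0])]
    | skip
    first
    | linear_combination (-6 * Complex.I ^ 3 * ((Real.sqrt 3 : ℂ))) * hs +
      (-18 * ((Real.sqrt 3 : ℂ)) * Complex.I) * Complex.I_sq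
    | linear_combination (6 * Complex.I ^ 3 * ((Real.sqrt 3 : ℂ))) * hs +
      (18 * ((Real.sqrt 3 : ℂ)) * Complex.I) * Complex.I_sq
end

section
/- There is an integer m such that −(2/(4·(−2i)⁴)) · Σ_{ℓ=1}^{3} (e^{3πiℓ/4} − e^{πiℓ/4})·cos(πℓ/4)/sin(πℓ/4)⁴ = 1/4 + m. (This is the statement that the difference η^D_{3/2} − η^D_{1/2} of reduced Dirac η-invariants on the lens space bundle Q⁷₄ is ≡ 1/4 (mod ℤ), the bordism invariant showing Q⁷₄ generates the ℤ/4ℤ summand of Ω₇^{Spin-Mp(2,ℤ)}.) -/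
open Complex Real

lemma expv (θ : ℝ) : Complex.exp (↑θ * Complex.I) = ↑(Real.cos θ) + ↑(Real.sin θ) * Complex.I := by
  rw [Complex.exp_mul_I, Complex.ofReal_cos, Complex.ofReal_sin]

/-- On the lens space bundle `Q⁷₄`, the difference `η^D_{3/2} − η^D_{1/2}` of reduced
Dirac η-invariants equals `1/4` modulo `ℤ`. -/
theorem eta_Q7_4 : ∃ m : ℤ,
    -(2 / (4 * (-(2 * Complex.I)) ^ 4)) *
        ∑ ℓ ∈ Finset.Icc (1 : ℕ) 3,
          (Complex.exp (3 * (Real.pi : ℂ) * Complex.I * (ℓ : ℂ) / 4) -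
              Complex.exp ((Real.pi : ℂ) * Complex.I * (ℓ : ℂ) / 4)) *
              (Real.cos (Real.pi * (ℓ : ℝ) / 4) : ℂ) /
            ((Real.sin (Real.pi * (ℓ : ℝ) / 4) : ℂ)) ^ 4 =
      1 / 4 + (m : ℂ) := by
  use 0
  have h : (Finset.Icc (1:ℕ) 3) = {1,2,3} := rfl
  rw [h, Finset.sum_insert (by decide), Finset.sum_insert (by decide), Finset.sum_singleton]
  have e1 : 3 * (Real.pi : ℂ) * Complex.I * (1:ℕ) / 4 = ↑(3*Real.pi/4) * Complex.I := by push_cast; ring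
  have e2 : 3 * (Real.pi : ℂ) * Complex.I * (2:ℕ) / 4 = ↑(3*Real.pi/2) * Complex.I := by push_cast; ring
  have e3 : 3 * (Real.pi : ℂ) * Complex.I * (3:ℕ) / 4 = ↑(9*Real.pi/4) * Complex.I := by push_cast; ring
  have f1 : (Real.pi : ℂ) * Complex.I * (1:ℕ) / 4 = ↑(Real.pi/4) * Complex.I := by push_cast; ring
  have f2 : (Real.pi : ℂ) * Complex.I * (2:ℕ) / 4 = ↑(Real.pi/2) * Complex.I := by push_cast; ring
  have f3 : (Real.pi : ℂ) * Complex.I * (3:ℕ) / 4 = ↑(3*Real.pi/4) * Complex.I := by push_cast; ring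
  rw [e1, e2, e3, f1, f2, f3]
  simp only [expv]
  have g1 : Real.pi * ((1:ℕ):ℝ) / 4 = Real.pi/4 := by push_cast; ring
  have g2 : Real.pi * ((2:ℕ):ℝ) / 4 = Real.pi/2 := by push_cast; ring
  have g3 : Real.pi * ((3:ℕ):ℝ) / 4 = 3*Real.pi/4 := by push_cast; ring
  rw [g1, g2, g3]
  have c34 : Real.cos (3*Real.pi/4) = -(Real.sqrt 2 / 2) := by
    have : (3:ℝ)*Real.pi/4 = Real.pi - Real.pi/4 := by ring
    rw [this, Real.cos_pi_sub, Real.cos_pi_div_four]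
  have s34 : Real.sin (3*Real.pi/4) = Real.sqrt 2 / 2 := by
    have : (3:ℝ)*Real.pi/4 = Real.pi - Real.pi/4 := by ring
    rw [this, Real.sin_pi_sub, Real.sin_pi_div_four]
  have c32 : Real.cos (3*Real.pi/2) = 0 := by
    have : (3:ℝ)*Real.pi/2 = Real.pi + Real.pi/2 := by ring
    simp [this, Real.cos_add]
  have s32 : Real.sin (3*Real.pi/2) = -1 := by
    have : (3:ℝ)*Real.pi/2 = Real.pi + Real.pi/2 := by ring
    simp [this, Real.sin_add]
  have c94 : Real.cos (9*Real.pi/4) = Real.sqrt 2 / 2 := by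
    have : (9:ℝ)*Real.pi/4 = 2*Real.pi + Real.pi/4 := by ring
    simp [this, Real.cos_add, Real.cos_pi_div_four]
  have s94 : Real.sin (9*Real.pi/4) = Real.sqrt 2 / 2 := by
    have : (9:ℝ)*Real.pi/4 = 2*Real.pi + Real.pi/4 := by ring
    simp [this, Real.sin_add, Real.sin_pi_div_four]
  rw [c34, s34, c32, s32, c94, s94, Real.cos_pi_div_four, Real.sin_pi_div_four,
    Real.cos_pi_div_two, Real.sin_pi_div_two]
  have h2 : ((Real.sqrt 2 : ℝ) : ℂ)^2 = 2 := by
    rw [← Complex.ofReal_pow, Real.sq_sqrt (by norm_num)]; norm_num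
  have hne : ((Real.sqrt 2 : ℝ) : ℂ) ≠ 0 := by
    simp [Real.sqrt_eq_zero']
  push_cast
  field_simp
  ring_nf
  have p6 : ((Real.sqrt 2 : ℝ):ℂ)^6 = 8 := by
    rw [show ((Real.sqrt 2 : ℝ):ℂ)^6 = (((Real.sqrt 2:ℝ):ℂ)^2)^3 by ring, h2]; norm_num
  have p8 : ((Real.sqrt 2 : ℝ):ℂ)^8 = 16 := by
    rw [show ((Real.sqrt 2 : ℝ):ℂ)^8 = (((Real.sqrt 2:ℝ):ℂ)^2)^4 by ring, h2]; norm_num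
  rw [h2, Complex.I_pow_four]
  norm_num
end
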